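/- There exist a real α₀ ∈ (0,1) and an integer v₀ such that for every real α ∈ (0, α₀] and every integer v ≥ v₀, setting p = 2, q = 4 and h = ⌊α·v³⌋, the following holds: for every integer i with 1 ≤ i ≤ h and all integers a, b with 0 ≤ a, 0 ≤ b and a, b ≤ v, one has g_i(a)·g_{i+1}(b) ≤ g_i(a+b). -/

import Mathlib

/-- `T p x` is the degree-`p` Taylor polynomial of the exponential function at `0`. -/
noncomputable def taylorExp (p : ℕ) (x : ℝ) : ℝ :=
  ∑ j ∈ Finset.range (p + 1), x ^ j / (Nat.factorial j : ℝ)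

/-- The round reward polynomial `g_i(x) = T_p(−x/(v^{q−1}·(3 − i/h)))`. -/
noncomputable def roundPoly (v h p q : ℕ) (i : ℕ) (x : ℝ) : ℝ :=
  taylorExp p (-(x / ((v : ℝ) ^ (q - 1) * (3 - (i : ℝ) / (h : ℝ)))))

lemma taylorExp_two (x : ℝ) : taylorExp 2 x = 1 + x + x ^ 2 / 2 := by
  simp [taylorExp, Finset.sum_range_succ, Nat.factorial]

lemma taylorExp_nonneg (x : ℝ) : 0 ≤ taylorExp 2 (-x) := by
  rw [taylorExp_two]; nlinarith [sq_nonneg (x - 1)]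

lemma taylorExp_mono {y y' : ℝ} (h0 : 0 ≤ y) (h1 : y ≤ y') (h2 : y' ≤ 1) :
    taylorExp 2 (-y') ≤ taylorExp 2 (-y) := by
  rw [taylorExp_two, taylorExp_two]; nlinarith

lemma taylorExp_mul {x y : ℝ} (hx : 0 ≤ x) (hy : 0 ≤ y) (hy1 : y ≤ 1) :
    taylorExp 2 (-x) * taylorExp 2 (-y) ≤ taylorExp 2 (-(x + y)) := by
  rw [taylorExp_two, taylorExp_two, taylorExp_two]
  nlinarith [mul_nonneg hx hy, sq_nonneg (x*y)]

/-- consequence of Claim 3.2 used in Lemma 4.5, regime `p = 2`, `q = 4`,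
`h = ⌊α·v³⌋`: there exist `α₀ ∈ (0,1)` and `v₀` such that for all `α ∈ (0, α₀]` and
`v ≥ v₀`, for every `1 ≤ i ≤ h` and all integers `0 ≤ a, b ≤ v`,
`g_i(a)·g_{i+1}(b) ≤ g_i(a+b)`. -/
theorem roundPoly_merge_rounds :
    ∃ α₀ : ℝ, α₀ ∈ Set.Ioo (0 : ℝ) 1 ∧ ∃ v₀ : ℕ,
      ∀ α : ℝ, 0 < α → α ≤ α₀ → ∀ v : ℕ, v₀ ≤ v →
        ∀ h : ℕ, h = ⌊α * (v : ℝ) ^ 3⌋₊ →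
          ∀ i a b : ℕ, 1 ≤ i → i ≤ h → a ≤ v → b ≤ v →
            roundPoly v h 2 4 i (a : ℝ) * roundPoly v h 2 4 (i + 1) (b : ℝ)
              ≤ roundPoly v h 2 4 i ((a : ℝ) + (b : ℝ)) := by
  refine ⟨1/2, ⟨by norm_num, by norm_num⟩, 1, ?_⟩
  intro α hα hα' v hv h hh i a b hi1 hih ha hb
  have hv1 : (1 : ℝ) ≤ (v : ℝ) := by exact_mod_cast hv
  have hh1 : (1 : ℝ) ≤ (h : ℝ) := by
    exact_mod_cast Nat.one_le_iff_ne_zero.mpr (by omega : h ≠ 0)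
  have hhpos : (0 : ℝ) < (h : ℝ) := by linarith
  have hih' : (i : ℝ) ≤ (h : ℝ) := by exact_mod_cast hih
  have hi0 : (0 : ℝ) ≤ (i : ℝ) := Nat.cast_nonneg i
  -- the denominators
  have hq : (4 : ℕ) - 1 = 3 := rfl
  set d : ℝ := (v : ℝ) ^ 3 with hd
  have hdv : (v : ℝ) ≤ d := by
    calc (v : ℝ) = (v : ℝ) * 1 * 1 := by ring
    _ ≤ (v : ℝ) * (v : ℝ) * (v : ℝ) := by
        apply mul_le_mul (mul_le_mul le_rfl hv1 (by norm_num) (by linarith)) hv1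
          (by norm_num) (by positivity)
    _ = d := by rw [hd]; ring
  have hd1 : (1 : ℝ) ≤ d := le_trans hv1 hdv
  set c : ℝ := d * (3 - (i : ℝ) / (h : ℝ)) with hc
  set c' : ℝ := d * (3 - ((i : ℕ) + 1 : ℕ) / (h : ℝ)) with hc'
  have hih2 : ((i : ℝ) + 1) / (h : ℝ) ≤ 2 := by
    rw [div_le_iff₀ hhpos]; linarith
  have hih3 : (i : ℝ) / (h : ℝ) ≤ 1 := by
    rw [div_le_one hhpos]; linarith
  have hc2 : 2 * d ≤ c := by rw [hc]; nlinarith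
  have hc'1 : d ≤ c' := by
    rw [hc']; push_cast; nlinarith
  have hcc' : c' ≤ c := by
    rw [hc, hc']; push_cast
    have h1 : (i : ℝ) / (h : ℝ) ≤ ((i : ℝ) + 1) / (h : ℝ) := by
      apply div_le_div_of_nonneg_right (by linarith) hhpos.le
    nlinarith
  have hcpos : 0 < c := by linarith
  have hc'pos : 0 < c' := by linarith
  have hav : (a : ℝ) ≤ (v : ℝ) := by exact_mod_cast ha
  have hbv : (b : ℝ) ≤ (v : ℝ) := by exact_mod_cast hb
  have ha0 : (0 : ℝ) ≤ (a : ℝ) := Nat.cast_nonneg a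
  have hb0 : (0 : ℝ) ≤ (b : ℝ) := Nat.cast_nonneg b
  -- reduce to the abstract lemmas
  have e1 : roundPoly v h 2 4 i (a : ℝ) = taylorExp 2 (-((a : ℝ) / c)) := by
    rw [roundPoly, hq, hc, hd]
  have e2 : roundPoly v h 2 4 (i + 1) (b : ℝ) = taylorExp 2 (-((b : ℝ) / c')) := by
    rw [roundPoly, hq, hc', hd]
  have e3 : roundPoly v h 2 4 i ((a : ℝ) + (b : ℝ)) =
      taylorExp 2 (-((a : ℝ) / c + (b : ℝ) / c)) := by
    rw [roundPoly, hq, hc, hd, ← add_div]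
  rw [e1, e2, e3]
  have hx0 : 0 ≤ (a : ℝ) / c := div_nonneg ha0 hcpos.le
  have hy0 : 0 ≤ (b : ℝ) / c := div_nonneg hb0 hcpos.le
  have hy'0 : 0 ≤ (b : ℝ) / c' := div_nonneg hb0 hc'pos.le
  have hy'1 : (b : ℝ) / c' ≤ 1 := by
    rw [div_le_one hc'pos]; linarith
  have hyy' : (b : ℝ) / c ≤ (b : ℝ) / c' :=
    div_le_div_of_nonneg_left hb0 hc'pos hcc'
  have hy1 : (b : ℝ) / c ≤ 1 := le_trans hyy' hy'1
  calc taylorExp 2 (-((a : ℝ) / c)) * taylorExp 2 (-((b : ℝ) / c'))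
      ≤ taylorExp 2 (-((a : ℝ) / c)) * taylorExp 2 (-((b : ℝ) / c)) := by
        apply mul_le_mul_of_nonneg_left (taylorExp_mono hy0 hyy' hy'1)
          (taylorExp_nonneg _)
    _ ≤ taylorExp 2 (-((a : ℝ) / c + (b : ℝ) / c)) :=
        taylorExp_mul hx0 hy0 hy1
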